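/- Let P and Q be finite-dimensional posets with min(dim(P), dim(Q)) ≥ max(abs(P), abs(Q)). Then max(dim(P), dim(Q)) ≤ dim(P × Q) ≤ dim(P) + dim(Q) − max(abs(P), abs(Q)). -/

import Mathlib

universe u

/-- The order dimension of a poset: the least cardinal `κ` such that the partial
order is the intersection of `κ` linear orderings (each extending it). -/
noncomputable def orderDim (α : Type u) [PartialOrder α] : Cardinal.{u} :=
  sInf {κ : Cardinal.{u} | ∃ (ι : Type u) (r : ι → α → α → Prop),
    (∀ i, IsLinearOrder α (r i)) ∧
    (∀ x y : α, x ≤ y ↔ ∀ i, r i x y) ∧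
    Cardinal.mk ι = κ}

section Aux

variable {α β : Type u} [PartialOrder α] [PartialOrder β]

/-- pullback of a linear order along an injection is a linear order -/
lemma isLinearOrder_comap {γ δ : Type*} (f : γ → δ) (hf : Function.Injective f)
    (r : δ → δ → Prop) (h : IsLinearOrder δ r) :
    IsLinearOrder γ (fun a b => r (f a) (f b)) := by
  haveI := h
  exact
    { refl := fun a => refl_of r _
      trans := fun a b c hab hbc => _root_.trans_of r hab hbc
      antisymm := fun a b hab hba => hf (antisymm_of r hab hba)
      total := fun a b => total_of r _ _ }

/-- separating linear extension -/
lemma exists_sep_ext (x y : α) (h : ¬ x ≤ y) :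
    ∃ s : α → α → Prop, IsLinearOrder α s ∧ (∀ a b : α, a ≤ b → s a b) ∧ ¬ s x y := by
  set r' : α → α → Prop := fun a b => a ≤ b ∨ (a ≤ y ∧ x ≤ b) with hr'
  haveI : IsPartialOrder α r' := by
    refine { refl := fun a => Or.inl le_rfl, trans := ?_, antisymm := ?_ }
    · rintro a b c (hab | ⟨hay, hxb⟩) (hbc | ⟨hby, hxc⟩)
      · exact Or.inl (hab.trans hbc)
      · exact Or.inr ⟨hab.trans hby, hxc⟩
      · exact Or.inr ⟨hay, hxb.trans hbc⟩
      · exact absurd (hxb.trans hby) h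
    · rintro a b (hab | ⟨hay, hxb⟩) (hba | ⟨hby, hxa⟩)
      · exact le_antisymm hab hba
      · exact absurd ((hxa.trans hab).trans hby) h
      · exact absurd ((hxb.trans hba).trans hay) h
      · exact absurd (hxa.trans hay) h
  obtain ⟨s, hs, hrs⟩ := extend_partialOrder r'
  refine ⟨s, hs, fun a b hab => hrs a b (Or.inl hab), fun hxy => ?_⟩
  haveI := hs
  have hyx : s y x := hrs y x (Or.inr ⟨le_rfl, le_rfl⟩)
  exact h (le_of_eq (antisymm_of s hxy hyx))

lemma dimSet_nonempty :
    {κ : Cardinal.{u} | ∃ (ι : Type u) (r : ι → α → α → Prop),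
      (∀ i, IsLinearOrder α (r i)) ∧ (∀ x y : α, x ≤ y ↔ ∀ i, r i x y) ∧
      Cardinal.mk ι = κ}.Nonempty := by
  refine ⟨_, ⟨{s : α → α → Prop // IsLinearOrder α s ∧ ∀ a b : α, a ≤ b → s a b},
    fun i => i.1, fun i => i.2.1, fun x y => ⟨fun hxy i => i.2.2 x y hxy, ?_⟩, rfl⟩⟩
  intro hall
  by_contra hxy
  obtain ⟨s, hs1, hs2, hs3⟩ := exists_sep_ext x y hxy
  exact hs3 (hall ⟨s, hs1, hs2⟩)

lemma orderDim_mem :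
    ∃ (ι : Type u) (r : ι → α → α → Prop),
      (∀ i, IsLinearOrder α (r i)) ∧ (∀ x y : α, x ≤ y ↔ ∀ i, r i x y) ∧
      Cardinal.mk ι = orderDim α :=
  csInf_mem dimSet_nonempty

lemma orderDim_le_mk {ι : Type u} (r : ι → α → α → Prop)
    (h1 : ∀ i, IsLinearOrder α (r i)) (h2 : ∀ x y : α, x ≤ y ↔ ∀ i, r i x y) :
    orderDim α ≤ Cardinal.mk ι :=
  csInf_le (OrderBot.bddBelow _) ⟨ι, r, h1, h2, rfl⟩

lemma orderDim_le_of_embedding (f : α ↪o β) : orderDim α ≤ orderDim β := by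
  obtain ⟨ι, r, h1, h2, h3⟩ := orderDim_mem (α := β)
  rw [← h3]
  refine orderDim_le_mk (fun i a b => r i (f a) (f b))
    (fun i => isLinearOrder_comap f f.injective (r i) (h1 i)) (fun x y => ?_)
  rw [← f.le_iff_le, h2]

lemma orderDim_eq_of_iso (e : α ≃o β) : orderDim α = orderDim β :=
  le_antisymm (orderDim_le_of_embedding e.toOrderEmbedding)
    (orderDim_le_of_embedding e.symm.toOrderEmbedding)

end Aux

section Aux2

variable {α β : Type u} [PartialOrder α] [PartialOrder β]

/-- lexicographic combination of two linear orders is linear -/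
lemma lex_isLinearOrder {γ δ : Type*} (r : γ → γ → Prop) (s : δ → δ → Prop)
    (hr : IsLinearOrder γ r) (hs : IsLinearOrder δ s) :
    IsLinearOrder (γ × δ)
      (fun x y => (r x.1 y.1 ∧ x.1 ≠ y.1) ∨ (x.1 = y.1 ∧ s x.2 y.2)) := by
  haveI := hr; haveI := hs
  refine { refl := fun a => Or.inr ⟨rfl, refl_of s _⟩, trans := ?_, antisymm := ?_,
           total := ?_ }
  · rintro a b c (⟨hab, hne⟩ | ⟨heq, hab⟩) (⟨hbc, hne'⟩ | ⟨heq', hbc⟩)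
    · refine Or.inl ⟨_root_.trans_of r hab hbc, fun hac => ?_⟩
      exact hne (antisymm_of r hab (hac ▸ hbc))
    · exact Or.inl ⟨heq' ▸ hab, heq' ▸ hne⟩
    · exact Or.inl ⟨heq ▸ hbc, heq ▸ hne'⟩
    · exact Or.inr ⟨heq.trans heq', _root_.trans_of s hab hbc⟩
  · rintro a b (⟨hab, hne⟩ | ⟨heq, hab⟩) (⟨hba, hne'⟩ | ⟨heq', hba⟩)
    · exact absurd (antisymm_of r hab hba) hne
    · exact absurd heq'.symm hne
    · exact absurd heq.symm hne'
    · exact Prod.ext heq (antisymm_of s hab hba)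
  · intro a b
    rcases eq_or_ne a.1 b.1 with heq | hne
    · rcases total_of s a.2 b.2 with h | h
      · exact Or.inl (Or.inr ⟨heq, h⟩)
      · exact Or.inr (Or.inr ⟨heq.symm, h⟩)
    · rcases total_of r a.1 b.1 with h | h
      · exact Or.inl (Or.inl ⟨h, hne⟩)
      · exact Or.inr (Or.inl ⟨h, hne.symm⟩)

lemma orderDim_prod_le : orderDim (α × β) ≤ orderDim α + orderDim β := by
  obtain ⟨ι, r, hr1, hr2, hr3⟩ := orderDim_mem (α := α)
  obtain ⟨κ, s, hs1, hs2, hs3⟩ := orderDim_mem (α := β)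
  obtain ⟨Lα, hLα, hLα'⟩ := extend_partialOrder ((· ≤ ·) : α → α → Prop)
  obtain ⟨Lβ, hLβ, hLβ'⟩ := extend_partialOrder ((· ≤ ·) : β → β → Prop)
  set t : ι ⊕ κ → (α × β) → (α × β) → Prop := fun k x y =>
    Sum.rec (fun i => (r i x.1 y.1 ∧ x.1 ≠ y.1) ∨ (x.1 = y.1 ∧ Lβ x.2 y.2))
      (fun j => (s j x.2 y.2 ∧ x.2 ≠ y.2) ∨ (x.2 = y.2 ∧ Lα x.1 y.1)) k with ht
  have htlin : ∀ k, IsLinearOrder (α × β) (t k) := by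
    rintro (i | j)
    · exact lex_isLinearOrder (r i) Lβ (hr1 i) hLβ
    · exact isLinearOrder_comap (f := Prod.swap) Prod.swap_injective _
        (lex_isLinearOrder (s j) Lα (hs1 j) hLα)
  have htiff : ∀ x y : α × β, x ≤ y ↔ ∀ k, t k x y := by
    intro x y
    constructor
    · rintro ⟨h1, h2⟩ (i | j)
      · rcases eq_or_ne x.1 y.1 with heq | hne
        · exact Or.inr ⟨heq, hLβ' _ _ h2⟩
        · exact Or.inl ⟨(hr2 x.1 y.1).mp h1 i, hne⟩
      · rcases eq_or_ne x.2 y.2 with heq | hne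
        · exact Or.inr ⟨heq, hLα' _ _ h1⟩
        · exact Or.inl ⟨(hs2 x.2 y.2).mp h2 j, hne⟩
    · intro hall
      haveI := fun i => hr1 i; haveI := fun j => hs1 j
      refine ⟨(hr2 x.1 y.1).mpr fun i => ?_, (hs2 x.2 y.2).mpr fun j => ?_⟩
      · rcases hall (Sum.inl i) with ⟨h, _⟩ | ⟨heq, _⟩
        · exact h
        · exact heq ▸ refl_of (r i) _
      · rcases hall (Sum.inr j) with ⟨h, _⟩ | ⟨heq, _⟩
        · exact h
        · exact heq ▸ refl_of (s j) _
  calc orderDim (α × β) ≤ Cardinal.mk (ι ⊕ κ) := orderDim_le_mk t htlin htiff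
    _ = orderDim α + orderDim β := by
        rw [Cardinal.mk_sum, Cardinal.lift_id, Cardinal.lift_id, hr3, hs3]

lemma orderDim_linear_le_one {γ : Type u} [LinearOrder γ] : orderDim γ ≤ 1 := by
  have := orderDim_le_mk (α := γ) (ι := PUnit) (fun _ a b => a ≤ b)
    (fun _ => inferInstance) (fun x y => ⟨fun h _ => h, fun h => h ⟨⟩⟩)
  simpa using this

lemma orderDim_subsingleton {γ : Type u} [PartialOrder γ] [Subsingleton γ] :
    orderDim γ ≤ 0 := by
  have := orderDim_le_mk (α := γ) (ι := PEmpty) (fun i => i.elim)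
    (fun i => i.elim) (fun x y => ⟨fun _ i => i.elim, fun _ => le_of_eq (Subsingleton.elim x y)⟩)
  simpa using this

end Aux2

section Aux3

lemma orderDim_pi_chains_le (n : ℕ) (T : Fin n → Type u) [inst : ∀ i, LinearOrder (T i)] :
    orderDim (∀ i, T i) ≤ (n : Cardinal) := by
  induction n with
  | zero => simpa using orderDim_subsingleton (γ := ∀ i, T i)
  | succ m ih =>
      have e := Fin.insertNthOrderIso T 0
      calc orderDim (∀ i, T i)
          = orderDim (T 0 × ∀ j : Fin m, T ((0 : Fin (m+1)).succAbove j)) :=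
            (orderDim_eq_of_iso e).symm
        _ ≤ orderDim (T 0) + orderDim (∀ j : Fin m, T ((0 : Fin (m+1)).succAbove j)) :=
            orderDim_prod_le
        _ ≤ 1 + (m : Cardinal) := add_le_add orderDim_linear_le_one (ih _)
        _ = ((m + 1 : ℕ) : Cardinal) := by push_cast; ring

/-- a linear order structure from an `IsLinearOrder` relation -/
noncomputable def linearOrderOfRel {γ : Type*} (r : γ → γ → Prop) (h : IsLinearOrder γ r) :
    LinearOrder γ :=
  haveI := h
  { le := r
    le_refl := fun a => refl_of r a
    le_trans := fun a b c => _root_.trans_of r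
    le_antisymm := fun a b => antisymm_of r
    le_total := total_of r
    toDecidableLE := Classical.decRel r
    toDecidableEq := Classical.decEq γ }

end Aux3

/-- The absorbency of a (finite-dimensional) poset `P`: the largest natural
number `n` such that taking the product of `P` with any `n`-tuple of (nonempty)
chains does not change the dimension. -/
noncomputable def absorb (P : Type u) [PartialOrder P] : ℕ :=
  sSup {n : ℕ | ∀ (T : Fin n → Type u) [∀ i, LinearOrder (T i)] [∀ i, Nonempty (T i)],
    orderDim (P × ∀ i, T i) = orderDim P}

section Aux4

variable {P : Type u} [PartialOrder P]

lemma zero_mem_absorbSet :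
    0 ∈ {n : ℕ | ∀ (T : Fin n → Type u) [∀ i, LinearOrder (T i)] [∀ i, Nonempty (T i)],
      orderDim (P × ∀ i, T i) = orderDim P} := by
  intro T _ _
  refine orderDim_eq_of_iso (α := P × ∀ i : Fin 0, T i) (β := P)
    ⟨⟨Prod.fst, fun p => (p, fun i => i.elim0), fun x => ?_, fun p => rfl⟩, ?_⟩
  · exact Prod.ext rfl (Subsingleton.elim _ _)
  · intro x y
    constructor
    · intro h
      exact ⟨h, le_of_eq (Subsingleton.elim _ _)⟩
    · exact fun h => h.1

lemma absorb_spec (T : Fin (absorb P) → Type u) [∀ i, LinearOrder (T i)]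
    [∀ i, Nonempty (T i)] : orderDim (P × ∀ i, T i) = orderDim P := by
  have h0 := zero_mem_absorbSet (P := P)
  by_cases hbdd : BddAbove {n : ℕ | ∀ (T : Fin n → Type u) [∀ i, LinearOrder (T i)]
      [∀ i, Nonempty (T i)], orderDim (P × ∀ i, T i) = orderDim P}
  · have hm : ∀ (T : Fin (absorb P) → Type u) [∀ i, LinearOrder (T i)] [∀ i, Nonempty (T i)],
        orderDim (P × ∀ i, T i) = orderDim P := Nat.sSup_mem ⟨0, h0⟩ hbdd
    exact hm T
  · have : absorb P = 0 := by
      rw [absorb, csSup_of_not_bddAbove hbdd, csSup_empty]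
      rfl
    revert T
    rw [this]
    exact fun T _ _ => h0 T

/-- type synonym carrying a chosen linear order -/
def Chainify {γ : Type u} (_s : γ → γ → Prop) : Type u := γ

def toChain {γ : Type u} (s : γ → γ → Prop) (x : γ) : Chainify s := x

noncomputable def Chainify.linOrd {γ : Type u} (s : γ → γ → Prop) (h : IsLinearOrder γ s) :
    LinearOrder (Chainify s) := linearOrderOfRel s h

lemma main_upper {A B : Type u} [PartialOrder A] [PartialOrder B] [Nonempty B]
    (dA dB a : ℕ) (hA : orderDim A = dA) (hB : orderDim B = dB) (ha : a ≤ dB)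
    (habs : ∀ (T : Fin a → Type u) [∀ i, LinearOrder (T i)] [∀ i, Nonempty (T i)],
      orderDim (A × ∀ i, T i) = orderDim A) :
    orderDim (A × B) ≤ ((dA + (dB - a) : ℕ) : Cardinal) := by
  obtain ⟨ι, s, hs1, hs2, hs3⟩ := orderDim_mem (α := B)
  rw [hB] at hs3
  obtain ⟨e⟩ := Cardinal.mk_eq_nat_iff.mp hs3
  set b := dB - a with hb
  have hab : a + b = dB := by omega
  let E : Fin a ⊕ Fin b ≃ ι := (finSumFinEquiv.trans (finCongr hab)).trans e.symm
  letI : ∀ i, LinearOrder (Chainify (s i)) := fun i => Chainify.linOrd (s i) (hs1 i)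
  haveI : ∀ i, Nonempty (Chainify (s i)) := fun i => ⟨toChain (s i) (Classical.arbitrary B)⟩
  have key : ∀ q q' : B, q ≤ q' ↔
      ((∀ k : Fin a, s (E (Sum.inl k)) q q') ∧ (∀ k : Fin b, s (E (Sum.inr k)) q q')) := by
    intro q q'
    rw [hs2]
    constructor
    · exact fun h => ⟨fun k => h _, fun k => h _⟩
    · rintro ⟨h1, h2⟩ i
      obtain ⟨k, rfl⟩ := E.surjective i
      cases k with
      | inl k => exact h1 k
      | inr k => exact h2 k
  have keyle : ∀ (i : ι) (q q' : B), (toChain (s i) q ≤ toChain (s i) q') ↔ s i q q' :=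
    fun i q q' => Iff.rfl
  let f : A × B ↪o (A × ∀ k : Fin a, Chainify (s (E (Sum.inl k))))
      × (∀ k : Fin b, Chainify (s (E (Sum.inr k)))) :=
    OrderEmbedding.ofMapLEIff
      (fun x => ((x.1, fun k => toChain _ x.2), fun k => toChain _ x.2)) (by
      rintro ⟨p, q⟩ ⟨p', q'⟩
      rw [Prod.mk_le_mk, Prod.mk_le_mk, Prod.mk_le_mk]
      constructor
      · rintro ⟨⟨h1, h2⟩, h3⟩
        exact ⟨h1, (key q q').mpr ⟨fun k => (keyle _ q q').mp (h2 k),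
          fun k => (keyle _ q q').mp (h3 k)⟩⟩
      · rintro ⟨h1, h2⟩
        obtain ⟨h2, h3⟩ := (key q q').mp h2
        exact ⟨⟨h1, fun k => (keyle _ q q').mpr (h2 k)⟩, fun k => (keyle _ q q').mpr (h3 k)⟩)
  calc orderDim (A × B)
      ≤ orderDim ((A × ∀ k : Fin a, Chainify (s (E (Sum.inl k))))
          × (∀ k : Fin b, Chainify (s (E (Sum.inr k))))) := orderDim_le_of_embedding f
    _ ≤ orderDim (A × ∀ k : Fin a, Chainify (s (E (Sum.inl k))))
        + orderDim (∀ k : Fin b, Chainify (s (E (Sum.inr k)))) := orderDim_prod_le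
    _ ≤ (dA : Cardinal) + (b : Cardinal) := by
        refine add_le_add ?_ (orderDim_pi_chains_le b _)
        rw [habs (fun k => Chainify (s (E (Sum.inl k)))), hA]
    _ = ((dA + b : ℕ) : Cardinal) := by push_cast; ring

end Aux4

/-- The bounded dimension of a (finite-dimensional) poset `P`: the greatest
natural number `n` such that some bounded subposet of `P` (equivalently, some
nonempty interval `[p, p']`) has dimension `n`. -/
noncomputable def bdDim (P : Type u) [PartialOrder P] : ℕ :=
  sSup {n : ℕ | ∃ p p' : P, p ≤ p' ∧ orderDim ↥(Set.Icc p p') = n}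

theorem stmt15 (P Q : Type u) [PartialOrder P] [Nonempty P] [PartialOrder Q] [Nonempty Q]
    (dP dQ : ℕ) (hdP : orderDim P = dP) (hdQ : orderDim Q = dQ)
    (habs : max (absorb P) (absorb Q) ≤ min dP dQ) :
    (max dP dQ : Cardinal) ≤ orderDim (P × Q) ∧
    orderDim (P × Q) ≤ ((dP + dQ - max (absorb P) (absorb Q) : ℕ) : Cardinal) := by
  constructor
  · have hP : orderDim P ≤ orderDim (P × Q) := orderDim_le_of_embedding
      (OrderEmbedding.ofMapLEIff (fun p => (p, Classical.arbitrary Q))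
        (fun p p' => by rw [Prod.mk_le_mk]; simp))
    have hQ : orderDim Q ≤ orderDim (P × Q) := orderDim_le_of_embedding
      (OrderEmbedding.ofMapLEIff (fun q => (Classical.arbitrary P, q))
        (fun q q' => by rw [Prod.mk_le_mk]; simp))
    rw [hdP] at hP
    rw [hdQ] at hQ
    exact max_le hP hQ
  · rcases le_total (absorb Q) (absorb P) with hc | hc
    · rw [max_eq_left hc] at habs ⊢
      have ha : absorb P ≤ dQ := habs.trans (min_le_right _ _)
      have h := main_upper dP dQ (absorb P) hdP hdQ ha (fun T _ _ => absorb_spec T)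
      have harith : dP + (dQ - absorb P) = dP + dQ - absorb P := by omega
      rwa [harith] at h
    · rw [max_eq_right hc] at habs ⊢
      have ha : absorb Q ≤ dP := habs.trans (min_le_left _ _)
      have h := main_upper dQ dP (absorb Q) hdQ hdP ha (fun T _ _ => absorb_spec T)
      have harith : dQ + (dP - absorb Q) = dP + dQ - absorb Q := by omega
      rw [harith] at h
      calc orderDim (P × Q) = orderDim (Q × P) := orderDim_eq_of_iso OrderIso.prodComm
        _ ≤ _ := h
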